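/- Let X be a double occurrence word and let G = A(X) be its alternance graph. Let G' be a graph with V(G') ⊆ V(X). Then G' is a vertex-minor of G if and only if there exists a sequence v of elements of V(X) such that G' = A(τ̃_v(X)[V(G')]). -/

import Mathlib

universe u v w

attribute [local instance 10] Classical.propDecidable

noncomputable section

variable {V : Type u} {E : Type v} {W : Type w}

/-- A finite labeled simple graph: a finite vertex set together with an
adjacency relation.  Well-formedness (symmetry, irreflexivity, support on the
vertex set) is captured by `LGraph.IsGraph`. -/
structure LGraph (V : Type u) where
  verts : Finset V
  Adj : V → V → Prop

namespace LGraph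

/-- `G` is an honest simple graph: `Adj` is symmetric, irreflexive and
supported on the vertex set. -/
def IsGraph (G : LGraph V) : Prop :=
  (∀ a b, G.Adj a b → G.Adj b a) ∧ (∀ a, ¬ G.Adj a a) ∧
    (∀ a b, G.Adj a b → a ∈ G.verts ∧ b ∈ G.verts)

/-- Local complementation at a vertex `v`: toggle every edge between two
distinct neighbours of `v`. -/
def localComp (G : LGraph V) (v : V) : LGraph V :=
  ⟨G.verts, fun a b => a ≠ b ∧ Xor' (G.Adj a b) (G.Adj v a ∧ G.Adj v b)⟩

/-- `τ_{v_k} ∘ ⋯ ∘ τ_{v_1}(G)` for a sequence `l = v_1 … v_k`. -/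
def localCompSeq (G : LGraph V) (l : List V) : LGraph V :=
  l.foldl LGraph.localComp G

/-- Induced subgraph on a set of vertices `A`. -/
def induce (G : LGraph V) (A : Finset V) : LGraph V :=
  ⟨G.verts ∩ A, fun a b => G.Adj a b ∧ a ∈ A ∧ b ∈ A⟩

/-- Vertex deletion `G \ v`. -/
def delete (G : LGraph V) (v : V) : LGraph V :=
  G.induce (G.verts.erase v)

/-- `G'` is a vertex-minor of `G`: there is a sequence of local
complementations at vertices of `G` after which the induced subgraph
on `V(G')` equals `G'`. -/
def IsVertexMinor (G' G : LGraph V) : Prop :=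
  ∃ l : List V, (∀ x ∈ l, x ∈ G.verts) ∧ (G.localCompSeq l).induce G'.verts = G'

/-- `G` and `G'` are related by a sequence of local complementations. -/
def LCEquiv (G G' : LGraph V) : Prop :=
  ∃ l : List V, (∀ x ∈ l, x ∈ G.verts) ∧ G.localCompSeq l = G'

/-- Connectedness of a labeled graph. -/
def Connected (G : LGraph V) : Prop :=
  G.verts.Nonempty ∧ ∀ a ∈ G.verts, ∀ b ∈ G.verts, Relation.ReflTransGen G.Adj a b

end LGraph

/-- The star graph on vertex set `V'` with center `c`. -/
def starGraph (V' : Finset V) (c : V) : LGraph V :=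
  ⟨V', fun a b => a ∈ V' ∧ b ∈ V' ∧ a ≠ b ∧ (a = c ∨ b = c)⟩

/-- `S_{V'} < G`: some star graph on the vertex set `V'` is a vertex-minor
of `G` (all stars on `V'` are LC-equivalent, so the choice of center is
immaterial). -/
def HasStarVertexMinor (G : LGraph V) (V' : Finset V) : Prop :=
  ∃ c ∈ V', (starGraph V' c).IsVertexMinor G

/-- Two words are equivalent if one is a cyclic permutation of the other or
of its reversal. -/
def WordEquiv (X Y : List V) : Prop :=
  (∃ n, Y = X.rotate n) ∨ (∃ n, Y = X.reverse.rotate n)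

/-- A double occurrence word: each letter occurring in it occurs exactly
twice. -/
def IsDOW (X : List V) : Prop := ∀ x ∈ X, X.count x = 2

/-- `(a, b)` is an alternance of (the equivalence class of) `X`: `a ≠ b`
and some word of the form `… a … b … a … b …` is equivalent to `X`. -/
def IsAlternance (X : List V) (a b : V) : Prop :=
  a ≠ b ∧ ∃ A B C D E' : List V,
    WordEquiv X (A ++ a :: (B ++ b :: (C ++ a :: (D ++ b :: E'))))

/-- The alternance graph `𝒜(X)` of a double occurrence word `X`. -/
def alternanceGraph (X : List V) : LGraph V :=
  ⟨X.toFinset, fun a b => IsAlternance X a b⟩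

/-- The operation `τ̃_v` on double occurrence words: writing `X = A v B v C`
with `v` not occurring in `A` or `B`, it returns `A v B̃ v C` where `B̃` is
the reversal of `B`.  (If `v` does not occur twice in `X`, the word is
returned unchanged.) -/
def tauWord (v : V) (X : List V) : List V :=
  let i := X.idxOf v
  let rest := X.drop (i + 1)
  let j := rest.idxOf v
  X.take (i + 1) ++ (rest.take j).reverse ++ rest.drop j

/-- `τ̃_{v_l} ∘ ⋯ ∘ τ̃_{v_1}(X)` for a sequence `l = v_1 … v_l`. -/
def tauWordSeq (l : List V) (X : List V) : List V :=
  l.foldl (fun Y x => tauWord x Y) X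

namespace AltAux
open List

variable {a b v : V} {X Y : List V}

/-- Boolean predicate for the pair `{a, b}`. -/
def pw (a b : V) : V → Bool := fun x => decide (x = a ∨ x = b)

lemma pw_iff {x : V} : pw a b x = true ↔ (x = a ∨ x = b) := by simp [pw]

/-- The alternation criterion. -/
def crit (X : List V) (a b : V) : Prop :=
  X.filter (pw a b) = [a, b, a, b] ∨ X.filter (pw a b) = [b, a, b, a]

lemma wordEquiv_iff : WordEquiv X Y ↔ (X ~r Y ∨ X.reverse ~r Y) := by
  unfold WordEquiv List.IsRotated
  constructor
  · rintro (⟨n, rfl⟩ | ⟨n, rfl⟩)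
    · exact Or.inl ⟨n, rfl⟩
    · exact Or.inr ⟨n, rfl⟩
  · rintro (⟨n, rfl⟩ | ⟨n, rfl⟩)
    · exact Or.inl ⟨n, rfl⟩
    · exact Or.inr ⟨n, rfl⟩

lemma isRotated_filter (p : V → Bool) (h : X ~r Y) : X.filter p ~r Y.filter p := by
  obtain ⟨n, rfl⟩ := h
  rw [rotate_eq_drop_append_take_mod, filter_append]
  conv_lhs => rw [← List.take_append_drop (n % X.length) X, filter_append]
  exact isRotated_append

lemma rot_abab {L : List V} (h : [a, b, a, b] ~r L) : L = [a, b, a, b] ∨ L = [b, a, b, a] := by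
  obtain ⟨n, rfl⟩ := h
  rw [← rotate_mod]
  have h4 : n % ([a, b, a, b] : List V).length < 4 := Nat.mod_lt _ (by simp)
  set m := n % ([a, b, a, b] : List V).length with hm
  interval_cases m <;> simp [rotate_cons_succ]


lemma pw_self_a : pw a b a = true := by simp [pw]
lemma pw_self_b : pw a b b = true := by simp [pw]

lemma crit_of_alternance (hX : IsDOW X) (h : IsAlternance X a b) : crit X a b := by
  obtain ⟨hab, A, B, C, D, E, hEq⟩ := h
  set Y := A ++ a :: (B ++ b :: (C ++ a :: (D ++ b :: E))) with hY
  have haY : a ∈ Y := by simp [hY]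
  have hbY : b ∈ Y := by simp [hY]
  rw [wordEquiv_iff] at hEq
  have hperm : X ~ Y := by
    rcases hEq with h | h
    · exact h.perm
    · exact (List.reverse_perm X).symm.trans h.perm
  have haX : a ∈ X := hperm.mem_iff.mpr haY
  have hbX : b ∈ X := hperm.mem_iff.mpr hbY
  have hca : Y.count a = 2 := by rw [← hperm.count_eq]; exact hX a haX
  have hcb : Y.count b = 2 := by rw [← hperm.count_eq]; exact hX b hbX
  simp only [hY, count_append, count_cons, beq_self_eq_true, if_pos, beq_iff_eq,
    hab, Ne.symm hab, if_false, if_true] at hca hcb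
  have hmem : ∀ x ∈ A ++ B ++ C ++ D ++ E, ¬ (pw a b x = true) := by
    intro x hx hpx
    have hxa : A.count a = 0 ∧ B.count a = 0 ∧ C.count a = 0 ∧ D.count a = 0 ∧ E.count a = 0 := by
      omega
    have hxb : A.count b = 0 ∧ B.count b = 0 ∧ C.count b = 0 ∧ D.count b = 0 ∧ E.count b = 0 := by
      omega
    rcases pw_iff.mp hpx with rfl | rfl
    · simp only [mem_append] at hx
      rcases hx with (((hx | hx) | hx) | hx) | hx <;>
        [exact count_eq_zero.mp hxa.1 hx; exact count_eq_zero.mp hxa.2.1 hx;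
         exact count_eq_zero.mp hxa.2.2.1 hx; exact count_eq_zero.mp hxa.2.2.2.1 hx;
         exact count_eq_zero.mp hxa.2.2.2.2 hx]
    · simp only [mem_append] at hx
      rcases hx with (((hx | hx) | hx) | hx) | hx <;>
        [exact count_eq_zero.mp hxb.1 hx; exact count_eq_zero.mp hxb.2.1 hx;
         exact count_eq_zero.mp hxb.2.2.1 hx; exact count_eq_zero.mp hxb.2.2.2.1 hx;
         exact count_eq_zero.mp hxb.2.2.2.2 hx]
  have fA : A.filter (pw a b) = [] := filter_eq_nil_iff.mpr fun x hx => hmem x (by simp [hx])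
  have fB : B.filter (pw a b) = [] := filter_eq_nil_iff.mpr fun x hx => hmem x (by simp [hx])
  have fC : C.filter (pw a b) = [] := filter_eq_nil_iff.mpr fun x hx => hmem x (by simp [hx])
  have fD : D.filter (pw a b) = [] := filter_eq_nil_iff.mpr fun x hx => hmem x (by simp [hx])
  have fE : E.filter (pw a b) = [] := filter_eq_nil_iff.mpr fun x hx => hmem x (by simp [hx])
  have filterY : Y.filter (pw a b) = [a, b, a, b] := by
    simp [hY, filter_append, filter_cons, pw_self_a, pw_self_b, fA, fB, fC, fD, fE]
  rcases hEq with h | h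
  · have : [a, b, a, b] ~r X.filter (pw a b) := by
      rw [← filterY]; exact (isRotated_filter _ h).symm
    exact rot_abab this
  · have h2 : [a, b, a, b] ~r (X.filter (pw a b)).reverse := by
      rw [← filterY, ← filter_reverse]; exact (isRotated_filter _ h).symm
    rcases rot_abab h2 with h3 | h3
    · right
      rw [← reverse_reverse (X.filter (pw a b)), h3]; rfl
    · left
      rw [← reverse_reverse (X.filter (pw a b)), h3]; rfl

lemma alternance_of_crit (hab : a ≠ b) (h : crit X a b) : IsAlternance X a b := by
  rcases h with hf | hf
  · rcases filter_eq_cons_iff.mp hf with ⟨A, X1, rfl, hA, -, h1⟩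
    rcases filter_eq_cons_iff.mp h1 with ⟨B, X2, rfl, hB, -, h2⟩
    rcases filter_eq_cons_iff.mp h2 with ⟨C, X3, rfl, hC, -, h3⟩
    rcases filter_eq_cons_iff.mp h3 with ⟨D, X4, rfl, hD, -, h4⟩
    exact ⟨hab, A, B, C, D, X4, Or.inl ⟨0, by rw [rotate_zero]⟩⟩
  · rcases filter_eq_cons_iff.mp hf with ⟨A, X1, rfl, hA, -, h1⟩
    rcases filter_eq_cons_iff.mp h1 with ⟨B, X2, rfl, hB, -, h2⟩
    rcases filter_eq_cons_iff.mp h2 with ⟨C, X3, rfl, hC, -, h3⟩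
    rcases filter_eq_cons_iff.mp h3 with ⟨D, X4, rfl, hD, -, h4⟩
    refine ⟨hab, B, C, D, X4 ++ A, [], Or.inl ⟨A.length + 1, ?_⟩⟩
    have hx : A ++ b :: (B ++ a :: (C ++ b :: (D ++ a :: X4)))
        = (A ++ [b]) ++ (B ++ a :: (C ++ b :: (D ++ a :: X4))) := by simp
    rw [hx]
    have := rotate_append_length_eq (A ++ [b]) (B ++ a :: (C ++ b :: (D ++ a :: X4)))
    simp only [length_append, length_cons, length_nil] at this ⊢
    rw [this]
    simp

lemma alternance_iff_crit (hX : IsDOW X) : IsAlternance X a b ↔ (a ≠ b ∧ crit X a b) := by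
  constructor
  · intro h
    exact ⟨h.1, crit_of_alternance hX h⟩
  · intro ⟨hab, h⟩
    exact alternance_of_crit hab h

lemma crit_mem (h : crit X a b) : a ∈ X ∧ b ∈ X := by
  have hsub : ∀ x, x ∈ X.filter (pw a b) → x ∈ X := fun x hx => mem_of_mem_filter hx
  rcases h with h | h
  · exact ⟨hsub a (by rw [h]; simp), hsub b (by rw [h]; simp)⟩
  · exact ⟨hsub a (by rw [h]; simp), hsub b (by rw [h]; simp)⟩

lemma IsDOW.filter' (p : V → Bool) (hX : IsDOW X) : IsDOW (X.filter p) := by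
  intro x hx
  rw [count_filter (of_mem_filter hx)]
  exact hX x (mem_of_mem_filter hx)

lemma crit_filter_iff {q : V → Bool} (hqa : q a = true) (hqb : q b = true) :
    crit (X.filter q) a b ↔ crit X a b := by
  have h : (X.filter q).filter (pw a b) = X.filter (pw a b) := by
    rw [filter_filter]
    apply filter_congr
    intro x _
    cases hpw : pw a b x
    · simp
    · simp only [Bool.true_and]
      rcases pw_iff.mp hpw with rfl | rfl
      · exact hqa
      · exact hqb
  unfold crit
  rw [h]

lemma alternanceGraph_filter (hX : IsDOW X) (W : Finset V) :
    alternanceGraph (X.filter (fun x => decide (x ∈ W))) = (alternanceGraph X).induce W := by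
  have hdow : IsDOW (X.filter (fun x => decide (x ∈ W))) :=
    IsDOW.filter' (fun x => decide (x ∈ W)) hX
  unfold alternanceGraph LGraph.induce
  show LGraph.mk _ _ = LGraph.mk _ _
  simp only [LGraph.mk.injEq]
  constructor
  · ext x
    simp [List.mem_filter, and_comm]
  · funext x y
    apply propext
    rw [alternance_iff_crit hdow, alternance_iff_crit hX]
    constructor
    · rintro ⟨hxy, hc⟩
      have hx : x ∈ X.filter (fun x => decide (x ∈ W)) := (crit_mem hc).1
      have hy : y ∈ X.filter (fun x => decide (x ∈ W)) := (crit_mem hc).2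
      have hxW : x ∈ W := by simpa using of_mem_filter hx
      have hyW : y ∈ W := by simpa using of_mem_filter hy
      exact ⟨⟨hxy, (crit_filter_iff (by simp [hxW]) (by simp [hyW])).mp hc⟩, hxW, hyW⟩
    · rintro ⟨⟨hxy, hc⟩, hxW, hyW⟩
      exact ⟨hxy, (crit_filter_iff (by simp [hxW]) (by simp [hyW])).mpr hc⟩

lemma indexOf_append_notMem {A : List V} (h : v ∉ A) (t : List V) :
    (A ++ v :: t).idxOf v = A.length := by
  induction A with
  | nil => simp
  | cons x A ih =>
    have hx : x ≠ v := fun hh => h (hh ▸ mem_cons_self)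
    have h' : v ∉ A := fun hh => h (mem_cons_of_mem x hh)
    simp only [cons_append, idxOf_cons, beq_false_of_ne hx, cond_false, ih h', length_cons, Nat.succ_eq_add_one]

lemma tauWord_split {A B C : List V} (hA : v ∉ A) (hB : v ∉ B) :
    tauWord v (A ++ v :: (B ++ v :: C)) = A ++ v :: (B.reverse ++ v :: C) := by
  simp only [tauWord]
  rw [indexOf_append_notMem hA]
  have h2 : (A ++ v :: (B ++ v :: C)).take (A.length + 1) = A ++ [v] := by
    simpa using take_length_add_append (l₁ := A) (l₂ := v :: (B ++ v :: C)) 1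
  have h3 : (A ++ v :: (B ++ v :: C)).drop (A.length + 1) = B ++ v :: C := by
    simpa using drop_length_add_append (l₁ := A) (l₂ := v :: (B ++ v :: C)) 1
  rw [h2, h3, indexOf_append_notMem hB, take_left, drop_left]
  simp

lemma exists_two_split (hX : IsDOW X) (hv : v ∈ X) :
    ∃ A B C, X = A ++ v :: (B ++ v :: C) ∧ v ∉ A ∧ v ∉ B ∧ v ∉ C := by
  have hc : X.count v = 2 := hX v hv
  have hf : X.filter (fun x => x == v) = [v, v] := by
    rw [filter_beq, hc]
    rfl
  rcases filter_eq_cons_iff.mp hf with ⟨A, X1, rfl, hA, -, h1⟩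
  rcases filter_eq_cons_iff.mp h1 with ⟨B, X2, rfl, hB, -, h2⟩
  have hC : v ∉ X2 := by
    intro h
    exact absurd (by simp : (v == v) = true) (filter_eq_nil_iff.mp h2 v h)
  refine ⟨A, B, X2, rfl, fun h => absurd (by simp) (hA v h), fun h => absurd (by simp) (hB v h), hC⟩
/-- Encoding of the two-letter alphabet `{a, b}` into `Bool`. -/
def fB (a : V) : V → Bool := fun x => decide (x = a)

/-- Alternation criterion at the level of `Bool` words. -/
def critB (L : List Bool) : Prop :=
  L = [true, false, true, false] ∨ L = [false, true, false, true]

instance critB.decidable (L : List Bool) : Decidable (critB L) := by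
  unfold critB; exact inferInstanceAs (Decidable (_ ∨ _))

lemma eq_iff_map_fB (hab : a ≠ b) {L P : List V} (hL : ∀ x ∈ L, x = a ∨ x = b)
    (hP : ∀ x ∈ P, x = a ∨ x = b) : L = P ↔ L.map (fB a) = P.map (fB a) := by
  constructor
  · rintro rfl; rfl
  · intro h
    induction L generalizing P with
    | nil => cases P with
      | nil => rfl
      | cons y P => simp at h
    | cons x L ih =>
      cases P with
      | nil => simp at h
      | cons y P =>
        simp only [map_cons, cons.injEq] at h
        obtain ⟨h1, h2⟩ := h
        have hx := hL x mem_cons_self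
        have hy := hP y mem_cons_self
        have hxy : x = y := by
          rcases hx with rfl | rfl <;> rcases hy with rfl | rfl <;>
            simp_all [fB, hab, Ne.symm hab]
        subst hxy
        rw [ih (fun z hz => hL z (mem_cons_of_mem x hz))
          (fun z hz => hP z (mem_cons_of_mem x hz)) h2]

lemma count_true_map (L : List V) : (L.map (fB a)).count true = L.count a := by
  rw [count_eq_countP, count_eq_countP, countP_map]
  apply countP_congr
  intro x _
  simp [fB, Function.comp]

lemma count_false_map (hab : a ≠ b) {L : List V} (hL : ∀ x ∈ L, x = a ∨ x = b) :
    (L.map (fB a)).count false = L.count b := by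
  rw [count_eq_countP, count_eq_countP, countP_map]
  apply countP_congr
  intro x hx
  rcases hL x hx with rfl | rfl <;> simp [fB, Function.comp, hab, Ne.symm hab]

lemma critL_iff_critB (hab : a ≠ b) {L : List V} (hL : ∀ x ∈ L, x = a ∨ x = b) :
    (L = [a, b, a, b] ∨ L = [b, a, b, a]) ↔ critB (L.map (fB a)) := by
  unfold critB
  rw [eq_iff_map_fB hab hL (by intro x hx; simp at hx; tauto),
    eq_iff_map_fB hab hL (by intro x hx; simp at hx; tauto)]
  simp [fB, hab, Ne.symm hab]

lemma exists_four (L : List Bool) (h : L.length = 4) :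
    ∃ x1 x2 x3 x4, L = [x1, x2, x3, x4] := by
  rcases L with _ | ⟨x1, _ | ⟨x2, _ | ⟨x3, _ | ⟨x4, _ | ⟨x5, L⟩⟩⟩⟩⟩ <;> simp at h
  exact ⟨x1, x2, x3, x4, rfl⟩

lemma boolcore_fin : ∀ (s t : Fin 5) (x1 x2 x3 x4 : Bool),
    (([x1, x2, x3, x4] : List Bool).count true = 2 →
     ([x1, x2, x3, x4] : List Bool).count false = 2 →
      (critB ((([x1, x2, x3, x4] : List Bool).take s)
          ++ ((([x1, x2, x3, x4] : List Bool).drop s).take t).reverse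
          ++ ((([x1, x2, x3, x4] : List Bool).drop s).drop t))
        ↔ Xor' (critB ([x1, x2, x3, x4] : List Bool))
            (((([x1, x2, x3, x4] : List Bool).drop s).take t).count true = 1 ∧
             ((([x1, x2, x3, x4] : List Bool).drop s).take t).count false = 1))) := by
  unfold Xor'
  decide

lemma boolcore (Af Bf Cf : List Bool) (ht : (Af ++ Bf ++ Cf).count true = 2)
    (hf : (Af ++ Bf ++ Cf).count false = 2) :
    critB (Af ++ Bf.reverse ++ Cf) ↔
      Xor' (critB (Af ++ Bf ++ Cf)) (Bf.count true = 1 ∧ Bf.count false = 1) := by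
  have hlen : (Af ++ Bf ++ Cf).length = 4 := by
    rw [← count_true_add_count_false]; omega
  obtain ⟨x1, x2, x3, x4, hF⟩ := exists_four _ hlen
  have hlen' : Af.length + Bf.length + Cf.length = 4 := by
    simp only [length_append] at hlen; omega
  have hAf : ([x1, x2, x3, x4] : List Bool).take Af.length = Af := by
    rw [← hF, append_assoc]; exact take_left
  have hdropA : ([x1, x2, x3, x4] : List Bool).drop Af.length = Bf ++ Cf := by
    rw [← hF, append_assoc]; exact drop_left
  have hBf : (Bf ++ Cf).take Bf.length = Bf := take_left
  have hCf : (Bf ++ Cf).drop Bf.length = Cf := drop_left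
  have hs : Af.length < 5 := by omega
  have htl : Bf.length < 5 := by omega
  have key := boolcore_fin ⟨Af.length, hs⟩ ⟨Bf.length, htl⟩ x1 x2 x3 x4
  simp only [Fin.val_mk] at key
  rw [hdropA, hAf, hBf, hCf, ← hF] at key
  exact key ht hf

lemma repl_crit (hva : v ≠ a) (α β γ : ℕ) :
    ((replicate α a ++ v :: (replicate β a ++ v :: replicate γ a) = [v, a, v, a]) ∨
     (replicate α a ++ v :: (replicate β a ++ v :: replicate γ a) = [a, v, a, v])) ↔
      (β = 1 ∧ α + γ = 1) := by
  constructor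
  · intro h
    have hlen : α + β + γ + 2 = 4 := by
      rcases h with h | h <;> (have := congrArg List.length h; simp at this; omega)
    have hα : α ≤ 2 := by omega
    have hβ : β ≤ 2 := by omega
    have hγ : γ ≤ 2 := by omega
    interval_cases α <;> interval_cases β <;> interval_cases γ <;>
      simp_all [replicate_succ, hva, Ne.symm hva]
  · rintro ⟨rfl, hαγ⟩
    have hα : α ≤ 1 := by omega
    interval_cases α
    · have : γ = 1 := by omega
      subst this
      left; simp [replicate_succ]
    · have : γ = 0 := by omega
      subst this
      right; simp [replicate_succ]

lemma filter_pw_eq_replicate {L : List V} (hva : v ≠ a) (hL : v ∉ L) :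
    L.filter (pw v a) = replicate (L.count a) a := by
  rw [show L.filter (pw v a) = L.filter (fun x => x == a) from filter_congr ?_, filter_beq]
  intro x hx
  have hxv : x ≠ v := fun h => hL (h ▸ hx)
  by_cases hxa : x = a <;> simp [pw, hxv, hxa]

lemma crit_middle_iff (hva : v ≠ a) {A B C : List V} (hA : v ∉ A) (hB : v ∉ B) (hC : v ∉ C) :
    crit (A ++ v :: (B ++ v :: C)) v a ↔ (B.count a = 1 ∧ A.count a + C.count a = 1) := by
  have hword : (A ++ v :: (B ++ v :: C)).filter (pw v a) =
      replicate (A.count a) a ++ v :: (replicate (B.count a) a ++ v :: replicate (C.count a) a) := by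
    simp [filter_append, filter_cons, (pw_self_a : pw v a v = true),
      filter_pw_eq_replicate hva hA, filter_pw_eq_replicate hva hB, filter_pw_eq_replicate hva hC]
  unfold crit
  rw [hword]
  rw [repl_crit hva]

lemma IsDOW.perm (h : X ~ Y) (hX : IsDOW X) : IsDOW Y := by
  intro x hx
  rw [← h.count_eq]
  exact hX x (h.mem_iff.mpr hx)

lemma crit_iff_of_filter_eq {Z : List V} (h : Y.filter (pw a b) = Z.filter (pw a b)) :
    crit Y a b ↔ crit Z a b := by
  unfold crit; rw [h]

lemma alternanceGraph_tauWord (hX : IsDOW X) (hv : v ∈ X) :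
    alternanceGraph (tauWord v X) = (alternanceGraph X).localComp v := by
  obtain ⟨A, B, C, hsplit, hA, hB, hC⟩ := exists_two_split hX hv
  subst hsplit
  set X' := A ++ v :: (B ++ v :: C) with hX'
  have hYsplit : tauWord v X' = A ++ v :: (B.reverse ++ v :: C) := tauWord_split hA hB
  set Y := tauWord v X' with hYdef
  have hperm : Y ~ X' := by
    rw [hYsplit]
    exact Perm.append_left A (Perm.cons v ((B.reverse_perm).append (Perm.refl (v :: C))))
  have hYdow : IsDOW Y := IsDOW.perm hperm.symm hX
  show LGraph.mk _ _ = LGraph.mk _ _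
  simp only [LGraph.mk.injEq]
  constructor
  · show Y.toFinset = X'.toFinset
    ext z
    simp [hperm.mem_iff]
  · funext x y
    apply propext
    show IsAlternance Y x y ↔
      (x ≠ y ∧ Xor' (IsAlternance X' x y) (IsAlternance X' v x ∧ IsAlternance X' v y))
    simp only [alternance_iff_crit hYdow, alternance_iff_crit hX]
    by_cases hxy : x = y
    · simp [hxy]
    -- the two cases where v ∈ {x, y}
    by_cases hvx : v = x
    · subst hvx
      have hrep : ∀ z ∈ B.filter (pw v y), z = y := fun z hz =>
        (pw_iff.mp (of_mem_filter hz)).resolve_left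
          (fun h => hB (h ▸ mem_of_mem_filter hz))
      have hBrev : (B.filter (pw v y)).reverse = B.filter (pw v y) := by
        rw [eq_replicate_of_mem hrep, reverse_replicate]
      have hfeq : Y.filter (pw v y) = X'.filter (pw v y) := by
        rw [hYsplit, hX']
        simp [filter_append, filter_cons, filter_reverse, hBrev]
      rw [crit_iff_of_filter_eq hfeq]
      simp [Xor', xor_def]
    by_cases hvy : v = y
    · subst hvy
      have hrep : ∀ z ∈ B.filter (pw x v), z = x := fun z hz =>
        (pw_iff.mp (of_mem_filter hz)).resolve_right
          (fun h => hB (h ▸ mem_of_mem_filter hz))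
      have hBrev : (B.filter (pw x v)).reverse = B.filter (pw x v) := by
        rw [eq_replicate_of_mem hrep, reverse_replicate]
      have hfeq : Y.filter (pw x v) = X'.filter (pw x v) := by
        rw [hYsplit, hX']
        simp [filter_append, filter_cons, filter_reverse, hBrev]
      rw [crit_iff_of_filter_eq hfeq]
      simp [Xor', xor_def]
    -- membership cases
    by_cases hxX : x ∈ X'
    swap
    · have n1 : ¬ crit X' x y := fun h => hxX (crit_mem h).1
      have n2 : ¬ crit X' v x := fun h => hxX (crit_mem h).2
      have n3 : ¬ crit Y x y := fun h => hxX (hperm.mem_iff.mp (crit_mem h).1)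
      simp [Xor', n1, n2, n3]
    by_cases hyX : y ∈ X'
    swap
    · have n1 : ¬ crit X' x y := fun h => hyX (crit_mem h).2
      have n2 : ¬ crit X' v y := fun h => hyX (crit_mem h).2
      have n3 : ¬ crit Y x y := fun h => hyX (hperm.mem_iff.mp (crit_mem h).2)
      simp [Xor', n1, n2, n3]
    -- main case
    have hpwv : pw x y v = false := by simp [pw, hvx, hvy]
    have hpwx : pw x y x = true := pw_self_a
    have hpwy : pw x y y = true := pw_self_b
    set Af := A.filter (pw x y) with hAf
    set Bf := B.filter (pw x y) with hBf
    set Cf := C.filter (pw x y) with hCf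
    have hlistX : X'.filter (pw x y) = Af ++ Bf ++ Cf := by
      rw [hX']
      simp [filter_append, filter_cons, hpwv, append_assoc]
      rfl
    have hlistY : Y.filter (pw x y) = Af ++ Bf.reverse ++ Cf := by
      rw [hYsplit]
      simp [filter_append, filter_cons, hpwv, filter_reverse, append_assoc]
      rfl
    have alphAll : ∀ z ∈ Af ++ Bf ++ Cf, z = x ∨ z = y := by
      intro z hz
      simp only [hAf, hBf, hCf, mem_append, mem_filter] at hz
      rcases hz with (hz | hz) | hz <;> exact pw_iff.mp hz.2
    have alphY : ∀ z ∈ Af ++ Bf.reverse ++ Cf, z = x ∨ z = y := by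
      intro z hz
      simp only [hAf, hBf, hCf, mem_append, mem_reverse, mem_filter] at hz
      rcases hz with (hz | hz) | hz <;> exact pw_iff.mp hz.2
    have alphB : ∀ z ∈ Bf, z = x ∨ z = y := fun z hz => pw_iff.mp (of_mem_filter hz)
    -- counts
    have hsumx : A.count x + B.count x + C.count x = 2 := by
      have := hX x hxX
      simp only [hX', count_append, count_cons] at this
      simp only [beq_iff_eq, hvx, if_false] at this
      omega
    have hsumy : A.count y + B.count y + C.count y = 2 := by
      have := hX y hyX
      simp only [hX', count_append, count_cons] at this
      simp only [beq_iff_eq, hvy, if_false] at this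
      omega
    have hcountx : (Af ++ Bf ++ Cf).count x = 2 := by
      rw [← hlistX, count_filter hpwx]
      exact hX x hxX
    have hcounty : (Af ++ Bf ++ Cf).count y = 2 := by
      rw [← hlistX, count_filter hpwy]
      exact hX y hyX
    have ctx : ((Af ++ Bf ++ Cf).map (fB x)).count true = 2 := by
      rw [count_true_map, hcountx]
    have cfx : ((Af ++ Bf ++ Cf).map (fB x)).count false = 2 := by
      rw [count_false_map hxy alphAll, hcounty]
    have hmapY : (Af ++ Bf.reverse ++ Cf).map (fB x)
        = Af.map (fB x) ++ (Bf.map (fB x)).reverse ++ Cf.map (fB x) := by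
      simp [map_append, map_reverse]
    have hmapX : (Af ++ Bf ++ Cf).map (fB x)
        = Af.map (fB x) ++ Bf.map (fB x) ++ Cf.map (fB x) := by
      simp [map_append]
    have core := boolcore (Af.map (fB x)) (Bf.map (fB x)) (Cf.map (fB x))
      (by rw [← hmapX]; exact ctx) (by rw [← hmapX]; exact cfx)
    rw [← hmapY, ← hmapX] at core
    have hcY : crit Y x y ↔ critB ((Af ++ Bf.reverse ++ Cf).map (fB x)) := by
      unfold crit
      rw [hlistY]
      exact critL_iff_critB hxy alphY
    have hcX : crit X' x y ↔ critB ((Af ++ Bf ++ Cf).map (fB x)) := by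
      unfold crit
      rw [hlistX]
      exact critL_iff_critB hxy alphAll
    have hBfx : (Bf.map (fB x)).count true = B.count x := by
      rw [count_true_map, hBf, count_filter hpwx]
    have hBfy : (Bf.map (fB x)).count false = B.count y := by
      rw [count_false_map hxy alphB, hBf, count_filter hpwy]
    have hmidx : crit X' v x ↔ (B.count x = 1 ∧ A.count x + C.count x = 1) :=
      crit_middle_iff (fun h => hvx h) hA hB hC
    have hmidy : crit X' v y ↔ (B.count y = 1 ∧ A.count y + C.count y = 1) :=
      crit_middle_iff (fun h => hvy h) hA hB hC
    have e1 : (B.count x = 1 ∧ A.count x + C.count x = 1) ↔ B.count x = 1 := by omega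
    have e2 : (B.count y = 1 ∧ A.count y + C.count y = 1) ↔ B.count y = 1 := by omega
    rw [hcY, core, hBfx, hBfy, hcX, hmidx, hmidy, e1, e2]
    simp only [Xor']
    constructor
    · rintro ⟨h1, ⟨hp, hn⟩ | ⟨hb, hna⟩⟩
      · exact ⟨h1, Or.inl ⟨⟨h1, hp⟩, fun hc => hn ⟨hc.1.2, hc.2.2⟩⟩⟩
      · exact ⟨h1, Or.inr ⟨⟨⟨hvx, hb.1⟩, ⟨hvy, hb.2⟩⟩, fun hc => hna hc.2⟩⟩
    · rintro ⟨h1, ⟨hp, hn⟩ | ⟨hb, hna⟩⟩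
      · exact ⟨h1, Or.inl ⟨hp.2, fun hc => hn ⟨⟨hvx, hc.1⟩, ⟨hvy, hc.2⟩⟩⟩⟩
      · exact ⟨h1, Or.inr ⟨⟨hb.1.2, hb.2.2⟩, fun hp => hna ⟨h1, hp⟩⟩⟩

lemma tauWord_perm (hX : IsDOW X) (hv : v ∈ X) : tauWord v X ~ X := by
  obtain ⟨A, B, C, rfl, hA, hB, hC⟩ := exists_two_split hX hv
  rw [tauWord_split hA hB]
  exact Perm.append_left A (Perm.cons v ((B.reverse_perm).append (Perm.refl (v :: C))))

lemma seq_facts (l : List V) : ∀ (X : List V), IsDOW X → (∀ x ∈ l, x ∈ X.toFinset) →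
    IsDOW (tauWordSeq l X) ∧ (tauWordSeq l X).toFinset = X.toFinset ∧
      (alternanceGraph X).localCompSeq l = alternanceGraph (tauWordSeq l X) := by
  induction l with
  | nil => exact fun X hX _ => ⟨hX, rfl, rfl⟩
  | cons v l ih =>
    intro X hX hmem
    have hv : v ∈ X := by simpa using hmem v mem_cons_self
    have hperm := tauWord_perm hX hv
    have hdow : IsDOW (tauWord v X) := IsDOW.perm hperm.symm hX
    have hfin : (tauWord v X).toFinset = X.toFinset := by
      ext z; simp [hperm.mem_iff]
    have hmem' : ∀ x ∈ l, x ∈ (tauWord v X).toFinset := by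
      intro x hx; rw [hfin]; exact hmem x (mem_cons_of_mem v hx)
    obtain ⟨h1, h2, h3⟩ := ih (tauWord v X) hdow hmem'
    refine ⟨h1, by rw [← hfin]; exact h2, ?_⟩
    calc (alternanceGraph X).localCompSeq (v :: l)
        = ((alternanceGraph X).localComp v).localCompSeq l := rfl
      _ = (alternanceGraph (tauWord v X)).localCompSeq l := by
          rw [alternanceGraph_tauWord hX hv]
      _ = alternanceGraph (tauWordSeq l (tauWord v X)) := h3
      _ = alternanceGraph (tauWordSeq (v :: l) X) := rfl

end AltAux

theorem vertexMinor_iff_tauWord (X : List V) (hX : IsDOW X)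
    (G' : LGraph V) (hG' : G'.IsGraph) (hsub : G'.verts ⊆ X.toFinset) :
    G'.IsVertexMinor (alternanceGraph X) ↔
      ∃ l : List V, (∀ x ∈ l, x ∈ X.toFinset) ∧
        G' = alternanceGraph ((tauWordSeq l X).filter fun x => decide (x ∈ G'.verts)) := by
  constructor
  · rintro ⟨l, hl, h⟩
    refine ⟨l, hl, ?_⟩
    obtain ⟨hdow, hfin, hG⟩ := AltAux.seq_facts l X hX hl
    rw [hG] at h
    rw [AltAux.alternanceGraph_filter hdow G'.verts]
    exact h.symm
  · rintro ⟨l, hl, h⟩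
    obtain ⟨hdow, hfin, hG⟩ := AltAux.seq_facts l X hX hl
    exact ⟨l, hl, by rw [hG, ← AltAux.alternanceGraph_filter hdow G'.verts, ← h]⟩
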